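/- Let Z and W be jointly distributed random variables with finite nonempty ranges Z and W. Then the maximal guessing probability satisfies P_guess(Z|W) ≤ 1/|Z| + d(Z|W), and equality holds if |Z| = 2. -/

import Mathlib

open Finset

/-- The distance of a distribution `P` on a finite set `Z` from the uniform
distribution: `d(P) = (1/2) ∑_z |P z - 1/|Z||`. -/
noncomputable def distUnif {Z : Type*} [Fintype Z] (P : Z → ℝ) : ℝ :=
  (1 / 2) * ∑ z, |P z - 1 / (Fintype.card Z : ℝ)|

/-- For a joint distribution `P` on `W × Z` (given as `P : W → Z → ℝ`), the expected
distance of `Z` from uniform given `W`: `d(Z|W) = ∑_w P_W(w) · d(P_{Z|W=w})`. -/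
noncomputable def dCond {W Z : Type*} [Fintype W] [Fintype Z] (P : W → Z → ℝ) : ℝ :=
  ∑ w, (∑ z, P w z) * distUnif (fun z => P w z / ∑ z', P w z')

/-- The maximal guessing probability of `Z` given `W`:
the supremum over all channels `C` from `W` to `Z` of `Pr[C(W) = Z]`. -/
noncomputable def pGuess {W Z : Type*} [Fintype W] [Fintype Z] (P : W → Z → ℝ) : ℝ :=
  sSup {p : ℝ | ∃ C : W → Z → ℝ,
    (∀ w z, 0 ≤ C w z) ∧ (∀ w, ∑ z, C w z = 1) ∧
    p = ∑ w, ∑ z, P w z * C w z}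

lemma single_le_half_abs_sum {Z : Type*} [Fintype Z] (t : Z → ℝ)
    (h : ∑ z, t z = 0) (z0 : Z) : t z0 ≤ (1/2) * ∑ z, |t z| := by
  have h1 : (|t z0| + t z0) / 2 ≤ ∑ z, (|t z| + t z) / 2 :=
    Finset.single_le_sum (f := fun z => (|t z| + t z)/2)
      (fun z _ => by have := neg_abs_le (t z); linarith) (Finset.mem_univ z0)
  have h2 : ∑ z, (|t z| + t z) / 2 = ((∑ z, |t z|) + ∑ z, t z) / 2 := by
    rw [← Finset.sum_add_distrib, ← Finset.sum_div]
  have h3 := le_abs_self (t z0)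
  rw [h2, h] at h1
  linarith

lemma dCond_eq {W Z : Type*} [Fintype W] [Fintype Z] [Nonempty Z] (P : W → Z → ℝ)
    (hP0 : ∀ w z, 0 ≤ P w z) :
    dCond P = ∑ w, (1/2) * ∑ z,
      |P w z - (∑ z', P w z') / (Fintype.card Z : ℝ)| := by
  unfold dCond distUnif
  refine Finset.sum_congr rfl fun w _ => ?_
  by_cases hs : (∑ z', P w z') = 0
  · have hz : ∀ z, P w z = 0 := fun z =>
      (Finset.sum_eq_zero_iff_of_nonneg (fun z _ => hP0 w z)).mp hs z (mem_univ z)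
    simp [hs, hz]
  · have hspos : 0 < ∑ z', P w z' :=
      lt_of_le_of_ne (Finset.sum_nonneg fun z _ => hP0 w z) (Ne.symm hs)
    have hn : (0:ℝ) < (Fintype.card Z : ℝ) := by
      exact_mod_cast Fintype.card_pos
    have key : ∀ z, (∑ z', P w z') * |P w z / (∑ z', P w z') - 1/(Fintype.card Z : ℝ)|
        = |P w z - (∑ z', P w z') / (Fintype.card Z : ℝ)| := by
      intro z
      have heq : (∑ z', P w z') * (P w z / (∑ z', P w z') - 1/(Fintype.card Z : ℝ))
          = P w z - (∑ z', P w z') / (Fintype.card Z : ℝ) := by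
        field_simp
      calc (∑ z', P w z') * |P w z / (∑ z', P w z') - 1/(Fintype.card Z : ℝ)|
          = |∑ z', P w z'| * |P w z / (∑ z', P w z') - 1/(Fintype.card Z : ℝ)| := by
            rw [abs_of_pos hspos]
        _ = |(∑ z', P w z') * (P w z / (∑ z', P w z') - 1/(Fintype.card Z : ℝ))| :=
            (abs_mul _ _).symm
        _ = _ := by rw [heq]
    rw [← mul_assoc, mul_comm (∑ z', P w z') ((1:ℝ)/2), mul_assoc, Finset.mul_sum]
    congr 1
    exact Finset.sum_congr rfl fun z _ => key z

lemma channel_bound {W Z : Type*} [Fintype W] [Fintype Z] [Nonempty Z]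
    (P : W → Z → ℝ) (hP0 : ∀ w z, 0 ≤ P w z) (hP1 : ∑ w, ∑ z, P w z = 1)
    (C : W → Z → ℝ) (hC0 : ∀ w z, 0 ≤ C w z) (hC1 : ∀ w, ∑ z, C w z = 1) :
    ∑ w, ∑ z, P w z * C w z ≤ 1 / (Fintype.card Z : ℝ) + dCond P := by
  have hn : (0:ℝ) < (Fintype.card Z : ℝ) := by exact_mod_cast Fintype.card_pos
  rw [dCond_eq P hP0]
  have hw : ∀ w, ∑ z, P w z * C w z ≤
      (∑ z', P w z') / (Fintype.card Z : ℝ) +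
      (1/2) * ∑ z, |P w z - (∑ z', P w z') / (Fintype.card Z : ℝ)| := by
    intro w
    set s := ∑ z', P w z' with hs
    set g := (1/2) * ∑ z, |P w z - s / (Fintype.card Z : ℝ)| with hg
    have hsum0 : ∑ z, (P w z - s / (Fintype.card Z : ℝ)) = 0 := by
      rw [Finset.sum_sub_distrib, Finset.sum_const, Finset.card_univ]
      rw [nsmul_eq_mul]
      field_simp
      exact sub_eq_zero.mpr hs.symm
    have hb : ∀ z, P w z ≤ s / (Fintype.card Z : ℝ) + g := by
      intro z
      have := single_le_half_abs_sum (fun z => P w z - s / (Fintype.card Z : ℝ)) hsum0 z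
      rw [hg]
      linarith
    calc ∑ z, P w z * C w z
        ≤ ∑ z, (s / (Fintype.card Z : ℝ) + g) * C w z :=
          Finset.sum_le_sum fun z _ =>
            mul_le_mul_of_nonneg_right (hb z) (hC0 w z)
      _ = (s / (Fintype.card Z : ℝ) + g) * ∑ z, C w z := by rw [Finset.mul_sum]
      _ = s / (Fintype.card Z : ℝ) + g := by rw [hC1 w, mul_one]
  calc ∑ w, ∑ z, P w z * C w z
      ≤ ∑ w, ((∑ z', P w z') / (Fintype.card Z : ℝ) +
        (1/2) * ∑ z, |P w z - (∑ z', P w z') / (Fintype.card Z : ℝ)|) :=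
        Finset.sum_le_sum fun w _ => hw w
    _ = 1 / (Fintype.card Z : ℝ) + ∑ w, (1/2) *
        ∑ z, |P w z - (∑ z', P w z') / (Fintype.card Z : ℝ)| := by
        rw [Finset.sum_add_distrib, ← Finset.sum_div, hP1]

lemma two_point (x y : ℝ) (h : y ≤ x) :
    x = (x + y) / 2 + (1/2) * (|x - (x + y)/2| + |y - (x + y)/2|) := by
  rw [abs_of_nonneg (by linarith), abs_of_nonpos (by linarith)]
  ring

/-- **Lemma 3 (paper: Lemma `lem:guessb`)**: for jointly distributed `Z` and `W`,
`P_guess(Z|W) ≤ 1/|Z| + d(Z|W)`, with equality when `Z` is binary. -/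
theorem lemma_guessb {W Z : Type*} [Fintype W] [Fintype Z] [Nonempty Z]
    (P : W → Z → ℝ) (hP0 : ∀ w z, 0 ≤ P w z) (hP1 : ∑ w, ∑ z, P w z = 1) :
    pGuess P ≤ 1 / (Fintype.card Z : ℝ) + dCond P ∧
      (Fintype.card Z = 2 → pGuess P = 1 / (Fintype.card Z : ℝ) + dCond P) := by
  have hbd0 : (0:ℝ) ≤ 1 / (Fintype.card Z : ℝ) + dCond P := by
    rw [dCond_eq P hP0]
    positivity
  have hub : pGuess P ≤ 1 / (Fintype.card Z : ℝ) + dCond P := by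
    apply Real.sSup_le _ hbd0
    rintro p ⟨C, hC0, hC1, rfl⟩
    exact channel_bound P hP0 hP1 C hC0 hC1
  refine ⟨hub, fun hcard => ?_⟩
  -- lower bound for the binary case
  have hbdd : BddAbove {p : ℝ | ∃ C : W → Z → ℝ,
      (∀ w z, 0 ≤ C w z) ∧ (∀ w, ∑ z, C w z = 1) ∧
      p = ∑ w, ∑ z, P w z * C w z} := by
    refine ⟨1 / (Fintype.card Z : ℝ) + dCond P, ?_⟩
    rintro p ⟨C, hC0, hC1, rfl⟩
    exact channel_bound P hP0 hP1 C hC0 hC1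
  classical
  have h2 : Nat.card Z = 2 := by rw [Nat.card_eq_fintype_card, hcard]
  obtain ⟨a, b, hab, huniv⟩ := Nat.card_eq_two_iff.mp h2
  have hZ : (Finset.univ : Finset Z) = {a, b} := by
    ext z
    have : z ∈ ({a, b} : Set Z) := huniv ▸ Set.mem_univ z
    simpa using this
  -- choose maximizers
  choose zm hzmem hzmax using fun w =>
    Finset.exists_max_image Finset.univ (P w) Finset.univ_nonempty
  set C : W → Z → ℝ := fun w z => if z = zm w then 1 else 0 with hC
  have hC0 : ∀ w z, 0 ≤ C w z := fun w z => by
    simp only [hC]; split <;> norm_num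
  have hC1 : ∀ w, ∑ z, C w z = 1 := fun w => by
    simp [hC]
  have hmem : (∑ w, P w (zm w)) ∈ {p : ℝ | ∃ C : W → Z → ℝ,
      (∀ w z, 0 ≤ C w z) ∧ (∀ w, ∑ z, C w z = 1) ∧
      p = ∑ w, ∑ z, P w z * C w z} := by
    refine ⟨C, hC0, hC1, ?_⟩
    refine Finset.sum_congr rfl fun w _ => ?_
    simp [hC, Finset.sum_ite_eq']
  have hval : (∑ w, P w (zm w)) = 1 / (Fintype.card Z : ℝ) + dCond P := by
    rw [dCond_eq P hP0]
    have h1 : (1:ℝ) / (Fintype.card Z : ℝ) = ∑ w, (∑ z', P w z') / (Fintype.card Z : ℝ) := by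
      rw [← Finset.sum_div, hP1]
    rw [h1, ← Finset.sum_add_distrib]
    refine Finset.sum_congr rfl fun w _ => ?_
    have hsum : ∀ f : Z → ℝ, ∑ z, f z = f a + f b := by
      intro f
      rw [hZ, Finset.sum_pair hab]
    have hcast : (Fintype.card Z : ℝ) = 2 := by rw [hcard]; norm_num
    rw [hsum (P w), hsum (fun z => |P w z - (P w a + P w b) / (Fintype.card Z : ℝ)|), hcast]
    have hz : zm w = a ∨ zm w = b := by
      have : zm w ∈ ({a, b} : Finset Z) := hZ ▸ hzmem w
      simpa using this
    rcases hz with h | h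
    · rw [h]
      have hle : P w b ≤ P w a := h ▸ hzmax w b (Finset.mem_univ b)
      exact two_point (P w a) (P w b) hle
    · rw [h]
      have hle : P w a ≤ P w b := h ▸ hzmax w a (Finset.mem_univ a)
      have h2p := two_point (P w b) (P w a) hle
      rw [add_comm (P w a) (P w b)]
      linarith
  have hlow : 1 / (Fintype.card Z : ℝ) + dCond P ≤ pGuess P := by
    rw [← hval]
    exact le_csSup hbdd hmem
  linarith
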